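/- Let Π = ⟨V, A, I, G⟩ be a STRIPS planning task, B ∈ ℕ, s ⊆ V a state, Vmax an hmax value function for s with hmax(s) = H ∈ ℕ finite, and let Wmax(v) = min(Vmax(v), H) ∈ ℕ. Define Φ_max as the set of state–cost pairs ⟨ŝ, ĉ⟩ with ŝ ⊆ V, ĉ ∈ ℕ, such that ĉ + H ≥ B and, for every v ∈ ŝ, ĉ + H ≥ B + Wmax(v). If ⟨ŝ, ĉ⟩ ∈ Φ_max, action a ∈ A is applicable in ŝ, and ĉ + cost(a) < B, then ⟨ŝ⟦a⟧, ĉ + cost(a)⟩ ∈ Φ_max. -/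

import Mathlib

/-- A STRIPS action over variable type `V`: preconditions, add effects,
delete effects (disjoint from add effects), and a natural-number cost. -/
structure StripsAction (V : Type*) where
  pre : Set V
  add : Set V
  del : Set V
  cost : ℕ
  del_disj : Disjoint del add

variable {V : Type*}

/-- An action is applicable in a state if its preconditions hold. -/
def StripsAction.applicable (a : StripsAction V) (s : Set V) : Prop := a.pre ⊆ s

/-- The successor state `s⟦a⟧ = (s \ del(a)) ∪ add(a)`. -/
def StripsAction.app (a : StripsAction V) (s : Set V) : Set V := (s \ a.del) ∪ a.add

/-- Result of applying a sequence of actions. -/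
def appSeq : Set V → List (StripsAction V) → Set V
  | s, [] => s
  | s, a :: π => appSeq (a.app s) π

/-- A sequence of actions is successively applicable from a state. -/
def applicableSeq : Set V → List (StripsAction V) → Prop
  | _, [] => True
  | s, a :: π => a.applicable s ∧ applicableSeq (a.app s) π

/-- Cost of an action sequence. -/
def seqCost (π : List (StripsAction V)) : ℕ := (π.map StripsAction.cost).sum

/-- A STRIPS planning task: a set of actions, initial state, and goal. -/
structure StripsTask (V : Type*) where
  acts : Set (StripsAction V)
  init : Set V
  goal : Set V

/-- `π` is a plan for state `s`: all its actions belong to the task, it is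
applicable from `s`, and the resulting state satisfies the goal. -/
def StripsTask.IsPlanFrom (T : StripsTask V) (s : Set V) (π : List (StripsAction V)) : Prop :=
  (∀ a ∈ π, a ∈ T.acts) ∧ applicableSeq s π ∧ T.goal ⊆ appSeq s π

/-- A plan for the task is a plan for its initial state. -/
def StripsTask.IsPlan (T : StripsTask V) (π : List (StripsAction V)) : Prop := T.IsPlanFrom T.init π

/-- The abstract action `a^α` induced by pattern `P`. -/
def StripsAction.abs (a : StripsAction V) (P : Set V) : StripsAction V where
  pre := a.pre ∩ P
  add := a.add ∩ P
  del := a.del ∩ P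
  cost := a.cost
  del_disj := a.del_disj.mono Set.inter_subset_left Set.inter_subset_left

/-- The abstract task `⟨P, {a^α | a ∈ A}, sα, G ∩ P⟩`. -/
def StripsTask.absTask (T : StripsTask V) (P : Set V) (sα : Set V) : StripsTask V where
  acts := (fun a => a.abs P) '' T.acts
  init := sα
  goal := T.goal ∩ P

/-- Abstract goal distance: infimum (in `ℕ∞`) of costs of abstract plans
for `sα` in the abstract task induced by pattern `P`. -/
noncomputable def absDist (T : StripsTask V) (P : Set V) (sα : Set V) : ℕ∞ :=
  sInf {c : ℕ∞ | ∃ π : List (StripsAction V), (T.absTask P sα).IsPlan π ∧ c = (seqCost π : ℕ∞)}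

/-- `Vm` is an hmax value function for state `s`: variables in `s` have value 0,
and any other variable's value is the infimum over achievers `a` of
`cost(a) + max_{p ∈ pre(a)} Vm(p)` (max over the empty set is 0,
infimum over the empty set is ∞). -/
def IsHmaxVal (T : StripsTask V) (s : Set V) (Vm : V → ℕ∞) : Prop :=
  (∀ v ∈ s, Vm v = 0) ∧
  ∀ v ∉ s, Vm v =
    sInf {c : ℕ∞ | ∃ a ∈ T.acts, v ∈ a.add ∧ c = (a.cost : ℕ∞) + sSup (Vm '' a.pre)}

/-- Inductivity lemma for the hmax certificate: with `H = hmax(s)` finite and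
`Wmax(v) = min(Vmax(v), H)`, the set
`Φ_max = {⟨ŝ, ĉ⟩ | ĉ + H ≥ B and ∀ v ∈ ŝ, ĉ + H ≥ B + Wmax(v)}`
is closed under action applications that stay strictly below the bound `B`. -/
theorem stmt16 [Fintype V] (T : StripsTask V) (B : ℕ) (s : Set V) (Vm : V → ℕ∞)
    (hVm : IsHmaxVal T s Vm) (H : ℕ) (hH : sSup (Vm '' T.goal) = (H : ℕ∞))
    (t : Set V) (c : ℕ)
    (hmem : (B : ℕ∞) ≤ (c : ℕ∞) + (H : ℕ∞) ∧
      ∀ v ∈ t, (B : ℕ∞) + min (Vm v) (H : ℕ∞) ≤ (c : ℕ∞) + (H : ℕ∞))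
    (a : StripsAction V) (ha : a ∈ T.acts) (happ : a.applicable t)
    (hlt : c + a.cost < B) :
    (B : ℕ∞) ≤ ((c + a.cost : ℕ) : ℕ∞) + (H : ℕ∞) ∧
      ∀ v ∈ a.app t,
        (B : ℕ∞) + min (Vm v) (H : ℕ∞) ≤ ((c + a.cost : ℕ) : ℕ∞) + (H : ℕ∞) := by
  obtain ⟨h1, h2⟩ := hmem
  have hcB : c < B := lt_of_le_of_lt (Nat.le_add_right c a.cost) hlt
  have hBcH : B ≤ c + H := by exact_mod_cast h1
  set D : ℕ := c + H - B with hDdef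
  have hDH : D < H := by omega
  have hCHmono : ((c : ℕ∞) + H) ≤ ((c + a.cost : ℕ) : ℕ∞) + H := by
    exact_mod_cast (by omega : c + H ≤ c + a.cost + H)
  refine ⟨le_trans h1 hCHmono, ?_⟩
  intro v hv
  rcases hv with hv | hv
  · exact le_trans (h2 v hv.1) hCHmono
  · by_cases hs : v ∈ s
    · have h0 : Vm v = 0 := hVm.1 v hs
      rw [h0]
      simpa using le_trans h1 hCHmono
    · -- every precondition has Vm ≤ D
      have hpre : ∀ p ∈ a.pre, Vm p ≤ (D : ℕ∞) := by
        intro p hp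
        have h := h2 p (happ hp)
        rcases le_or_gt (H : ℕ∞) (Vm p) with hle | hlt'
        · rw [min_eq_right hle] at h
          have : B + H ≤ c + H := by exact_mod_cast h
          omega
        · have hne : Vm p ≠ ⊤ := ne_top_of_lt hlt'
          lift Vm p to ℕ using hne with n hn
          rw [min_eq_left hlt'.le] at h
          have hn' : B + n ≤ c + H := by exact_mod_cast h
          have hnH : n < H := by exact_mod_cast hlt'
          exact_mod_cast (by omega : n ≤ D)
      have hsup : sSup (Vm '' a.pre) ≤ (D : ℕ∞) := by
        apply sSup_le
        rintro _ ⟨p, hp, rfl⟩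
        exact hpre p hp
      have hVv : Vm v ≤ (a.cost : ℕ∞) + (D : ℕ∞) := by
        have heq := (hVm.2 v hs)
        calc Vm v ≤ (a.cost : ℕ∞) + sSup (Vm '' a.pre) := by
              rw [heq]; exact sInf_le ⟨a, ha, hv, rfl⟩
          _ ≤ (a.cost : ℕ∞) + D := by exact add_le_add_right hsup _
      calc (B : ℕ∞) + min (Vm v) (H : ℕ∞) ≤ (B : ℕ∞) + Vm v :=
            add_le_add_right (min_le_left _ _) _
        _ ≤ (B : ℕ∞) + ((a.cost : ℕ∞) + D) := add_le_add_right hVv _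
        _ = ((c + a.cost : ℕ) : ℕ∞) + H := by
            exact_mod_cast congrArg Nat.cast (by omega : B + (a.cost + D) = c + a.cost + H)
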